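/- Let V be a Hilbert space, a, a' : D → ℝ measurable with 0 < a'₋ ≤ a'(x), and let u, u' ∈ H¹(D) satisfy ∫_D a ∇u·∇v dx = F(v) and ∫_D a' ∇u'·∇v dx = F(v) for all v in a closed subspace V of H¹(D). Then ∫_D a' ‖∇u − ∇u'‖² dx = ∫_D (a' − a) ∇u · (∇u − ∇u') dx, and consequently ‖∇(u − u')‖_{L²(D)} ≤ (1/a'₋) ‖a' − a‖_{L^∞(D)} ‖∇u‖_{L²(D)}. -/

import Mathlib

open MeasureTheory

/-- Pathwise perturbation identity for weak solutions of two elliptic problems with the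
same right-hand side: `U, U'` are the gradient fields of `u, u'`, `S` the set of gradient
fields of admissible test functions. -/
theorem stmt10 {D : Type*} [MeasurableSpace D] (μ : Measure D)
    {E : Type*} [NormedAddCommGroup E] [InnerProductSpace ℝ E]
    (a a' : D → ℝ) (aminus' Ka : ℝ) (ha' : ∀ x, aminus' ≤ a' x) (hamin : 0 < aminus')
    (haa : ∀ x, |a' x - a x| ≤ Ka)
    (U U' : D → E) (F : (D → E) → ℝ) (S : Set (D → E))
    (hmem : (fun x => U x - U' x) ∈ S)
    (h1 : ∀ G ∈ S, (∫ x, a x * inner (𝕜 := ℝ) (U x) (G x) ∂μ) = F G)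
    (h2 : ∀ G ∈ S, (∫ x, a' x * inner (𝕜 := ℝ) (U' x) (G x) ∂μ) = F G)
    (hi1 : Integrable (fun x => ‖U x‖ ^ 2) μ)
    (hi2 : Integrable (fun x => ‖U x - U' x‖ ^ 2) μ)
    (hi3 : Integrable (fun x => a' x * ‖U x - U' x‖ ^ 2) μ)
    (hi4 : Integrable (fun x => a' x * inner (𝕜 := ℝ) (U x) (U x - U' x)) μ)
    (hi5 : Integrable (fun x => a x * inner (𝕜 := ℝ) (U x) (U x - U' x)) μ) :
    (∫ x, a' x * ‖U x - U' x‖ ^ 2 ∂μ)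
        = (∫ x, (a' x - a x) * inner (𝕜 := ℝ) (U x) (U x - U' x) ∂μ)
    ∧ Real.sqrt (∫ x, ‖U x - U' x‖ ^ 2 ∂μ)
        ≤ (1 / aminus') * Ka * Real.sqrt (∫ x, ‖U x‖ ^ 2 ∂μ) := by
  rcases isEmpty_or_nonempty D with hD | hD
  · simp [integral_of_isEmpty]
  have hKa : 0 ≤ Ka := le_trans (abs_nonneg _) (haa (Classical.arbitrary D))
  -- integrability of a' ⟨U', G⟩ where G = U - U'
  have hptw : ∀ x, a' x * inner (𝕜 := ℝ) (U' x) (U x - U' x)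
      = a' x * inner (𝕜 := ℝ) (U x) (U x - U' x) - a' x * ‖U x - U' x‖ ^ 2 := by
    intro x
    have : (inner (𝕜 := ℝ) (U x - U' x) (U x - U' x)) = ‖U x - U' x‖ ^ 2 :=
      real_inner_self_eq_norm_sq _
    rw [← this, inner_sub_left]
    ring
  have hi6 : Integrable (fun x => a' x * inner (𝕜 := ℝ) (U' x) (U x - U' x)) μ := by
    have := hi4.sub hi3
    exact this.congr (Filter.Eventually.of_forall fun x => (hptw x).symm)
  -- the weak formulations applied to G = U - U'
  have e1 : (∫ x, a x * inner (𝕜 := ℝ) (U x) (U x - U' x) ∂μ) = F (fun x => U x - U' x) := by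
    have := h1 _ hmem
    simpa using this
  have e2 : (∫ x, a' x * inner (𝕜 := ℝ) (U' x) (U x - U' x) ∂μ) = F (fun x => U x - U' x) := by
    have := h2 _ hmem
    simpa using this
  have key : (∫ x, a' x * ‖U x - U' x‖ ^ 2 ∂μ)
      = (∫ x, (a' x - a x) * inner (𝕜 := ℝ) (U x) (U x - U' x) ∂μ) := by
    have hsplit : (∫ x, a' x * ‖U x - U' x‖ ^ 2 ∂μ)
        = (∫ x, a' x * inner (𝕜 := ℝ) (U x) (U x - U' x) ∂μ)
          - (∫ x, a' x * inner (𝕜 := ℝ) (U' x) (U x - U' x) ∂μ) := by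
      rw [← integral_sub hi4 hi6]
      refine integral_congr_ae (Filter.Eventually.of_forall fun x => ?_)
      show a' x * ‖U x - U' x‖ ^ 2 = a' x * inner (𝕜 := ℝ) (U x) (U x - U' x)
        - a' x * inner (𝕜 := ℝ) (U' x) (U x - U' x)
      rw [hptw x]; ring
    rw [hsplit, e2, ← e1, ← integral_sub hi4 hi5]
    refine integral_congr_ae (Filter.Eventually.of_forall fun x => ?_)
    ring
  refine ⟨key, ?_⟩
  -- notation
  set I := ∫ x, ‖U x - U' x‖ ^ 2 ∂μ with hIdef
  set J := ∫ x, ‖U x‖ ^ 2 ∂μ with hJdef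
  have hI0 : 0 ≤ I := integral_nonneg fun x => sq_nonneg _
  have hJ0 : 0 ≤ J := integral_nonneg fun x => sq_nonneg _
  -- measurability of norms
  have hmU : AEStronglyMeasurable (fun x => ‖U x‖) μ := by
    have : (fun x => ‖U x‖) = fun x => Real.sqrt (‖U x‖ ^ 2) := by
      funext x; rw [Real.sqrt_sq (norm_nonneg _)]
    rw [this]
    exact Real.continuous_sqrt.comp_aestronglyMeasurable hi1.1
  have hmG : AEStronglyMeasurable (fun x => ‖U x - U' x‖) μ := by
    have : (fun x => ‖U x - U' x‖) = fun x => Real.sqrt (‖U x - U' x‖ ^ 2) := by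
      funext x; rw [Real.sqrt_sq (norm_nonneg _)]
    rw [this]
    exact Real.continuous_sqrt.comp_aestronglyMeasurable hi2.1
  -- Memℒp statements
  have hLU : MemLp (fun x => ‖U x‖) 2 μ :=
    (memLp_two_iff_integrable_sq hmU).2 (by simpa [sq] using hi1)
  have hLG : MemLp (fun x => ‖U x - U' x‖) 2 μ :=
    (memLp_two_iff_integrable_sq hmG).2 (by simpa [sq] using hi2)
  -- integrability of the product of norms
  have hiprod : Integrable (fun x => ‖U x‖ * ‖U x - U' x‖) μ := by
    refine Integrable.mono' ((hi1.add hi2).div_const 2) (hmU.mul hmG)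
      (Filter.Eventually.of_forall fun x => ?_)
    have h := sq_nonneg (‖U x‖ - ‖U x - U' x‖)
    rw [Real.norm_of_nonneg (mul_nonneg (norm_nonneg _) (norm_nonneg _))]
    simp only [Pi.add_apply]
    nlinarith [norm_nonneg (U x), norm_nonneg (U x - U' x)]
  -- Cauchy-Schwarz for integrals
  have hCS : (∫ x, ‖U x‖ * ‖U x - U' x‖ ∂μ) ≤ Real.sqrt J * Real.sqrt I := by
    have hpq : Real.HolderConjugate 2 2 := Real.HolderConjugate.two_two
    have h := integral_mul_le_Lp_mul_Lq_of_nonneg hpq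
      (Filter.Eventually.of_forall fun x => norm_nonneg (U x))
      (Filter.Eventually.of_forall fun x => norm_nonneg (U x - U' x))
      (by simpa using hLU) (by simpa using hLG)
    have hrw1 : (∫ x, ‖U x‖ ^ (2 : ℝ) ∂μ) = J := by
      rw [hJdef]; congr 1; funext x
      rw [show ((2:ℝ)) = ((2:ℕ):ℝ) by norm_num, Real.rpow_natCast]
    have hrw2 : (∫ x, ‖U x - U' x‖ ^ (2 : ℝ) ∂μ) = I := by
      rw [hIdef]; congr 1; funext x
      rw [show ((2:ℝ)) = ((2:ℕ):ℝ) by norm_num, Real.rpow_natCast]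
    rw [hrw1, hrw2] at h
    rw [Real.sqrt_eq_rpow, Real.sqrt_eq_rpow]
    convert h using 2 <;> norm_num
  -- lower bound
  have hlow : aminus' * I ≤ ∫ x, a' x * ‖U x - U' x‖ ^ 2 ∂μ := by
    rw [hIdef, ← integral_const_mul]
    refine integral_mono (hi2.const_mul _) hi3 fun x => ?_
    exact mul_le_mul_of_nonneg_right (ha' x) (sq_nonneg _)
  -- upper bound
  have hup : (∫ x, (a' x - a x) * inner (𝕜 := ℝ) (U x) (U x - U' x) ∂μ)
      ≤ Ka * (Real.sqrt J * Real.sqrt I) := by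
    have step : (∫ x, (a' x - a x) * inner (𝕜 := ℝ) (U x) (U x - U' x) ∂μ)
        ≤ ∫ x, Ka * (‖U x‖ * ‖U x - U' x‖) ∂μ := by
      refine integral_mono ((hi4.sub hi5).congr
        (Filter.Eventually.of_forall fun x => by simp only [Pi.sub_apply]; ring)) (hiprod.const_mul _) fun x => ?_
      calc (a' x - a x) * inner (𝕜 := ℝ) (U x) (U x - U' x)
          ≤ |(a' x - a x) * inner (𝕜 := ℝ) (U x) (U x - U' x)| := le_abs_self _
        _ = |a' x - a x| * |inner (𝕜 := ℝ) (U x) (U x - U' x)| := abs_mul _ _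
        _ ≤ Ka * (‖U x‖ * ‖U x - U' x‖) :=
            mul_le_mul (haa x) (abs_real_inner_le_norm _ _)
              (abs_nonneg _) hKa
    calc _ ≤ ∫ x, Ka * (‖U x‖ * ‖U x - U' x‖) ∂μ := step
      _ = Ka * ∫ x, ‖U x‖ * ‖U x - U' x‖ ∂μ := integral_const_mul _ _
      _ ≤ Ka * (Real.sqrt J * Real.sqrt I) := mul_le_mul_of_nonneg_left hCS hKa
  have main : aminus' * I ≤ Ka * (Real.sqrt J * Real.sqrt I) := by
    calc aminus' * I ≤ ∫ x, a' x * ‖U x - U' x‖ ^ 2 ∂μ := hlow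
      _ = _ := key
      _ ≤ _ := hup
  have hIsq : Real.sqrt I * Real.sqrt I = I := Real.mul_self_sqrt hI0
  rcases eq_or_lt_of_le (Real.sqrt_nonneg I) with h0 | h0
  · rw [← h0]
    positivity
  · rw [← hIsq] at main
    have h2 : aminus' * Real.sqrt I ≤ Ka * Real.sqrt J := by
      nlinarith [h0]
    calc Real.sqrt I ≤ (Ka * Real.sqrt J) / aminus' := by
          rw [le_div_iff₀ hamin]; linarith [h2]
      _ = (1 / aminus') * Ka * Real.sqrt J := by ring
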